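/- Let R be an algebraic curvature tensor on an n-dimensional inner product space (n ≥ 4) satisfying: for all distinct indices i, j, k of an orthonormal basis, R(eᵢ,eⱼ,eⱼ,eᵢ) + R(eᵢ,eₖ,eₖ,eᵢ) ≥ 0. Then for every orthonormal basis {e₁,...,eₙ}, the partial sum Σ_{i,j=1}^{n-1} R(eᵢ,eⱼ,eⱼ,eᵢ) is non-negative. -/

import Mathlib

open scoped RealInnerProductSpace

lemma aux_pairwise_sum {α : Type*} [DecidableEq α] {T : Finset α} {f : α → ℝ}
    (hT : 2 ≤ T.card)
    (h : ∀ j ∈ T, ∀ k ∈ T, j ≠ k → 0 ≤ f j + f k) :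
    0 ≤ ∑ j ∈ T, f j := by
  have key : 0 ≤ ∑ j ∈ T, ∑ k ∈ T.erase j, (f j + f k) := by
    apply Finset.sum_nonneg
    intro j hj
    apply Finset.sum_nonneg
    intro k hk
    exact h j hj k (Finset.mem_of_mem_erase hk) (fun e => (Finset.ne_of_mem_erase hk) e.symm)
  have expand : ∑ j ∈ T, ∑ k ∈ T.erase j, (f j + f k)
      = 2 * (T.card - 1) * ∑ j ∈ T, f j := by
    have : ∀ j ∈ T, ∑ k ∈ T.erase j, (f j + f k)
        = (T.card - 1) * f j + (∑ k ∈ T, f k) - f j := by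
      intro j hj
      rw [Finset.sum_add_distrib, Finset.sum_const, Finset.card_erase_of_mem hj,
        Finset.sum_erase_eq_sub hj, nsmul_eq_mul]
      have hc : 1 ≤ T.card := le_trans (by norm_num) hT
      push_cast [Nat.cast_sub hc]
      ring
    rw [Finset.sum_congr rfl this]
    rw [Finset.sum_sub_distrib, Finset.sum_add_distrib, Finset.sum_const,
      ← Finset.mul_sum, nsmul_eq_mul]
    ring
  rw [expand] at key
  have hc2 : (2:ℝ) ≤ (T.card : ℝ) := by exact_mod_cast hT
  nlinarith

/-- If an algebraic curvature tensor `R` on `ℝⁿ` (`n ≥ 4`) satisfies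
`R(eᵢ,eⱼ,eⱼ,eᵢ) + R(eᵢ,eₖ,eₖ,eᵢ) ≥ 0` for all distinct indices of any orthonormal
basis, then for every orthonormal basis the partial sum
`Σ_{i,j=1}^{n-1} R(eᵢ,eⱼ,eⱼ,eᵢ)` (i.e. omitting the last index) is non-negative. -/
theorem stmt_2 (n : ℕ) (hn : 4 ≤ n)
    (R : EuclideanSpace ℝ (Fin n) →ₗ[ℝ] EuclideanSpace ℝ (Fin n) →ₗ[ℝ]
      EuclideanSpace ℝ (Fin n) →ₗ[ℝ] EuclideanSpace ℝ (Fin n) →ₗ[ℝ] ℝ)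
    (hanti1 : ∀ x y z w, R x y z w = - R y x z w)
    (hanti2 : ∀ x y z w, R x y z w = - R x y w z)
    (hpair : ∀ x y z w, R x y z w = R z w x y)
    (hbianchi : ∀ x y z w, R x y z w + R y z x w + R z x y w = 0)
    (hcond : ∀ b : OrthonormalBasis (Fin n) ℝ (EuclideanSpace ℝ (Fin n)),
      ∀ i j k : Fin n, i ≠ j → i ≠ k → j ≠ k →
        0 ≤ R (b i) (b j) (b j) (b i) + R (b i) (b k) (b k) (b i)) :
    ∀ b : OrthonormalBasis (Fin n) ℝ (EuclideanSpace ℝ (Fin n)),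
      0 ≤ ∑ i ∈ Finset.univ.erase (⟨n - 1, by omega⟩ : Fin n),
            ∑ j ∈ Finset.univ.erase (⟨n - 1, by omega⟩ : Fin n),
              R (b i) (b j) (b j) (b i) := by
  intro b
  set S := Finset.univ.erase (⟨n - 1, by omega⟩ : Fin n) with hS
  have hdiag : ∀ x : EuclideanSpace ℝ (Fin n), ∀ z w, R x x z w = 0 := by
    intro x z w
    have := hanti1 x x z w
    linarith
  apply Finset.sum_nonneg
  intro i hi
  have hsplit : ∑ j ∈ S, R (b i) (b j) (b j) (b i)
      = ∑ j ∈ S.erase i, R (b i) (b j) (b j) (b i) := by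
    rw [Finset.sum_erase_eq_sub hi, hdiag]
    ring
  rw [hsplit]
  apply aux_pairwise_sum
  · have hScard : S.card = n - 1 := by
      rw [hS, Finset.card_erase_of_mem (Finset.mem_univ _), Finset.card_univ,
        Fintype.card_fin]
    rw [Finset.card_erase_of_mem (by simpa using hi), hScard]
    omega
  · intro j hj k hk hjk
    exact hcond b i j k (fun e => (Finset.ne_of_mem_erase hj) e.symm)
      (fun e => (Finset.ne_of_mem_erase hk) e.symm) hjk
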